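/- Every almost automorphic sequence S : ℤ → X extends to a compact almost automorphic function f : ℝ → X with f|_ℤ = S; explicitly, the piecewise linear interpolation f(t) = S(k) + (t−k)(S(k+1) − S(k)) for k ≤ t < k+1 is compact almost automorphic. -/

import Mathlib

open Filter Topology

variable {X : Type*} [NormedAddCommGroup X]

/-- `f ∈ PC_ℤ(ℝ; X)`: continuous on each `[n, n+1)`, `n ∈ ℤ`, with a left
limit at each integer. -/
def PCZ (f : ℝ → X) : Prop :=
  (∀ n : ℤ, ContinuousOn f (Set.Ico (n : ℝ) ((n : ℝ) + 1))) ∧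
  ∀ n : ℤ, ∃ L : X, Filter.Tendsto f (nhdsWithin (n : ℝ) (Set.Iio (n : ℝ))) (nhds L)

/-- `f` is ℤ-almost automorphic: `f ∈ PC_ℤ(ℝ;X)` and for every sequence of
integers there are a subsequence and a function `g` with the pointwise
bi-limit property. -/
def ZAA (f : ℝ → X) : Prop :=
  PCZ f ∧ ∀ s : ℕ → ℤ, ∃ (φ : ℕ → ℕ) (g : ℝ → X), StrictMono φ ∧
    (∀ t : ℝ, Filter.Tendsto (fun n => f (t + (s (φ n) : ℝ))) Filter.atTop (nhds (g t))) ∧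
    (∀ t : ℝ, Filter.Tendsto (fun n => g (t - (s (φ n) : ℝ))) Filter.atTop (nhds (f t)))

/-- `S : ℤ → X` is a (discrete) almost automorphic sequence. -/
def AAZseq (S : ℤ → X) : Prop :=
  ∀ s : ℕ → ℤ, ∃ (φ : ℕ → ℕ) (T : ℤ → X), StrictMono φ ∧
    (∀ k : ℤ, Filter.Tendsto (fun n => S (k + s (φ n))) Filter.atTop (nhds (T k))) ∧
    (∀ k : ℤ, Filter.Tendsto (fun n => T (k - s (φ n))) Filter.atTop (nhds (S k)))

/-- `f : ℝ → X` is compact almost automorphic. -/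
def KAA (f : ℝ → X) : Prop :=
  Continuous f ∧ ∀ s : ℕ → ℝ, ∃ (φ : ℕ → ℕ) (g : ℝ → X), StrictMono φ ∧
    (∀ K : Set ℝ, IsCompact K →
      TendstoUniformlyOn (fun n t => f (t + s (φ n))) g Filter.atTop K) ∧
    (∀ K : Set ℝ, IsCompact K →
      TendstoUniformlyOn (fun n t => g (t - s (φ n))) f Filter.atTop K)


noncomputable def interp [NormedSpace ℝ X] (T : ℤ → X) (t : ℝ) : X :=
  T ⌊t⌋ + (t - (⌊t⌋ : ℝ)) • (T (⌊t⌋ + 1) - T ⌊t⌋)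

lemma interp_intCast [NormedSpace ℝ X] (T : ℤ → X) (n : ℤ) : interp T (n : ℝ) = T n := by
  simp [interp]

lemma interp_add_int [NormedSpace ℝ X] (T : ℤ → X) (u : ℝ) (m : ℤ) :
    interp T (u + (m : ℝ)) = interp (fun k => T (k + m)) u := by
  simp only [interp, Int.floor_add_intCast]
  push_cast
  rw [add_right_comm (⌊u⌋) m 1]
  ring_nf

lemma interp_sub_int [NormedSpace ℝ X] (T : ℤ → X) (u : ℝ) (m : ℤ) :
    interp T (u - (m : ℝ)) = interp (fun k => T (k - m)) u := by
  simp only [interp, Int.floor_sub_intCast]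
  push_cast
  rw [sub_add_eq_add_sub (⌊u⌋) m 1]
  ring_nf

lemma continuousOn_interp_Icc [NormedSpace ℝ X] (T : ℤ → X) (n : ℤ) :
    ContinuousOn (interp T) (Set.Icc (n : ℝ) ((n : ℝ) + 1)) := by
  have haff : ContinuousOn (fun u : ℝ => T n + (u - (n : ℝ)) • (T (n + 1) - T n))
      (Set.Icc (n : ℝ) ((n : ℝ) + 1)) := by fun_prop
  refine haff.congr fun u hu => ?_
  rcases eq_or_lt_of_le hu.2 with h | h
  · have h1 : u = ((n + 1 : ℤ) : ℝ) := by push_cast; linarith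
    rw [h1, interp_intCast]
    push_cast
    rw [show ((n:ℝ) + 1 - n) = 1 by ring, one_smul]
    abel
  · have hfl : ⌊u⌋ = n := Int.floor_eq_iff.mpr ⟨hu.1, h⟩
    simp [interp, hfl]

lemma continuous_interp [NormedSpace ℝ X] (T : ℤ → X) : Continuous (interp T) := by
  rw [continuous_iff_continuousAt]
  intro t
  rcases eq_or_lt_of_le (Int.floor_le t) with h | h
  · -- t is an integer
    have htB : t ∈ Set.Icc ((⌊t⌋ : ℝ)) ((⌊t⌋ : ℝ) + 1) := ⟨Int.floor_le t, (Int.lt_floor_add_one t).le⟩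
    have htA : t ∈ Set.Icc ((⌊t⌋ : ℝ) - 1) ((⌊t⌋ : ℝ)) := ⟨by linarith [Int.floor_le t], h.ge⟩
    have cA : ContinuousWithinAt (interp T) (Set.Icc ((⌊t⌋ : ℝ) - 1) ((⌊t⌋ : ℝ))) t := by
      have := (continuousOn_interp_Icc T (⌊t⌋ - 1)) t (by push_cast; exact ⟨by linarith [htA.1], by linarith [htA.2]⟩)
      have hset : Set.Icc (((⌊t⌋ - 1 : ℤ)) : ℝ) (((⌊t⌋ - 1 : ℤ) : ℝ) + 1) = Set.Icc ((⌊t⌋ : ℝ) - 1) ((⌊t⌋ : ℝ)) := by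
        push_cast; norm_num
      rwa [hset] at this
    have cB : ContinuousWithinAt (interp T) (Set.Icc ((⌊t⌋ : ℝ)) ((⌊t⌋ : ℝ) + 1)) t :=
      (continuousOn_interp_Icc T ⌊t⌋) t htB
    have := cA.union cB
    refine this.continuousAt ?_
    have : Set.Icc ((⌊t⌋ : ℝ) - 1) ((⌊t⌋ : ℝ) + 1) ⊆
        Set.Icc ((⌊t⌋ : ℝ) - 1) ((⌊t⌋ : ℝ)) ∪ Set.Icc ((⌊t⌋ : ℝ)) ((⌊t⌋ : ℝ) + 1) := by
      intro x hx
      rcases le_total x ((⌊t⌋ : ℝ)) with hx' | hx'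
      · exact Or.inl ⟨hx.1, hx'⟩
      · exact Or.inr ⟨hx', hx.2⟩
    exact Filter.mem_of_superset (Icc_mem_nhds (by linarith) (by linarith [Int.lt_floor_add_one t])) this
  · exact ((continuousOn_interp_Icc T ⌊t⌋).continuousAt
      (Icc_mem_nhds h (Int.lt_floor_add_one t)))

lemma norm_interp_sub_le [NormedSpace ℝ X] (A B : ℤ → X) (u : ℝ) :
    ‖interp A u - interp B u‖ ≤ 2 * ‖A ⌊u⌋ - B ⌊u⌋‖ + ‖A (⌊u⌋ + 1) - B (⌊u⌋ + 1)‖ := by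
  have h0 : (0 : ℝ) ≤ u - (⌊u⌋ : ℝ) := by linarith [Int.floor_le u]
  have h1 : u - (⌊u⌋ : ℝ) ≤ 1 := by linarith [Int.lt_floor_add_one u]
  have key : interp A u - interp B u
      = (A ⌊u⌋ - B ⌊u⌋) + (u - (⌊u⌋ : ℝ)) • ((A (⌊u⌋ + 1) - B (⌊u⌋ + 1)) - (A ⌊u⌋ - B ⌊u⌋)) := by
    simp only [interp]; module
  rw [key]
  calc ‖(A ⌊u⌋ - B ⌊u⌋) + (u - (⌊u⌋ : ℝ)) • ((A (⌊u⌋ + 1) - B (⌊u⌋ + 1)) - (A ⌊u⌋ - B ⌊u⌋))‖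
      ≤ ‖A ⌊u⌋ - B ⌊u⌋‖ + ‖(u - (⌊u⌋ : ℝ)) • ((A (⌊u⌋ + 1) - B (⌊u⌋ + 1)) - (A ⌊u⌋ - B ⌊u⌋))‖ :=
        norm_add_le _ _
    _ ≤ ‖A ⌊u⌋ - B ⌊u⌋‖ + 1 * ‖(A (⌊u⌋ + 1) - B (⌊u⌋ + 1)) - (A ⌊u⌋ - B ⌊u⌋)‖ := by
        rw [norm_smul]
        gcongr
        rw [Real.norm_eq_abs, abs_of_nonneg h0]; exact h1
    _ ≤ 2 * ‖A ⌊u⌋ - B ⌊u⌋‖ + ‖A (⌊u⌋ + 1) - B (⌊u⌋ + 1)‖ := by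
        rw [one_mul]
        have := norm_sub_le (A (⌊u⌋ + 1) - B (⌊u⌋ + 1)) (A ⌊u⌋ - B ⌊u⌋)
        linarith

lemma interp_unif [NormedSpace ℝ X] {A : ℕ → ℤ → X} {B : ℤ → X}
    (h : ∀ k, Tendsto (fun n => A n k) atTop (nhds (B k))) (M : ℝ) {ε : ℝ} (hε : 0 < ε) :
    ∀ᶠ n in atTop, ∀ u ∈ Set.Icc (-M) M, ‖interp (A n) u - interp B u‖ < ε := by
  have key : ∀ᶠ n in atTop, ∀ k ∈ Finset.Icc (⌊-M⌋) (⌊M⌋ + 1), ‖A n k - B k‖ < ε / 4 := by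
    rw [eventually_all_finset]
    intro k _
    have := Metric.tendsto_nhds.mp (h k) (ε / 4) (by positivity)
    simpa [dist_eq_norm] using this
  filter_upwards [key] with n hn u hu
  have hfl1 : ⌊u⌋ ∈ Finset.Icc (⌊-M⌋) (⌊M⌋ + 1) := by
    rw [Finset.mem_Icc]
    exact ⟨Int.floor_le_floor hu.1, le_trans (Int.floor_le_floor hu.2) (by omega)⟩
  have hfl2 : ⌊u⌋ + 1 ∈ Finset.Icc (⌊-M⌋) (⌊M⌋ + 1) := by
    rw [Finset.mem_Icc]
    have h1 : ⌊-M⌋ ≤ ⌊u⌋ := Int.floor_le_floor hu.1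
    have h2 : ⌊u⌋ ≤ ⌊M⌋ := Int.floor_le_floor hu.2
    omega
  have := norm_interp_sub_le (A n) B u
  have b1 := hn _ hfl1
  have b2 := hn _ hfl2
  linarith

/-- Every almost automorphic sequence extends to a compact almost automorphic
function: the piecewise linear interpolation
`f(t) = S(⌊t⌋) + (t − ⌊t⌋)(S(⌊t⌋+1) − S(⌊t⌋))` is compact almost automorphic
and restricts to `S` on ℤ. -/
theorem stmt16 [NormedSpace ℝ X] (S : ℤ → X) (hS : AAZseq S)
    (f : ℝ → X)
    (hfdef : ∀ t : ℝ, f t = S ⌊t⌋ + (t - (⌊t⌋ : ℝ)) • (S (⌊t⌋ + 1) - S ⌊t⌋)) :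
    KAA f ∧ ∀ n : ℤ, f (n : ℝ) = S n := by
  have hf : f = interp S := funext fun t => hfdef t
  constructor
  · rw [hf]
    refine ⟨continuous_interp S, fun s => ?_⟩
    obtain ⟨rL, hrL, φ₁, hφ₁, hr⟩ := (isCompact_Icc : IsCompact (Set.Icc (0 : ℝ) 1)).tendsto_subseq
      (x := fun n => Int.fract (s n)) (fun n => ⟨Int.fract_nonneg _, (Int.fract_lt_one _).le⟩)
    obtain ⟨φ₂, T, hφ₂, hT1, hT2⟩ := hS fun n => ⌊s (φ₁ n)⌋
    have hψm : StrictMono (φ₁ ∘ φ₂) := hφ₁.comp hφ₂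
    have hrψ : Tendsto (fun n => Int.fract (s (φ₁ (φ₂ n)))) atTop (nhds rL) :=
      hr.comp hφ₂.tendsto_atTop
    refine ⟨φ₁ ∘ φ₂, fun t => interp T (t + rL), hψm, ?_, ?_⟩
    · intro K hK
      rw [Metric.tendstoUniformlyOn_iff]
      intro ε hε
      obtain ⟨M, hM⟩ := hK.isBounded.subset_closedBall 0
      rw [Real.closedBall_eq_Icc, zero_sub, zero_add] at hM
      obtain ⟨δ, hδpos, hδ⟩ := Metric.uniformContinuousOn_iff.mp
        ((isCompact_Icc (a := -(M + 2)) (b := M + 2)).uniformContinuousOn_of_continuous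
          (continuous_interp T).continuousOn) (ε / 2) (half_pos hε)
      have E1 := interp_unif (A := fun n k => S (k + ⌊s (φ₁ (φ₂ n))⌋)) (B := T) hT1
        (M + 1) (half_pos hε)
      have E2 := Metric.tendsto_nhds.mp hrψ δ hδpos
      filter_upwards [E1, E2] with n h1 h2 t ht
      have htM : t ∈ Set.Icc (-M) M := hM ht
      set r := Int.fract (s (φ₁ (φ₂ n))) with hrdef
      set m := ⌊s (φ₁ (φ₂ n))⌋ with hmdef
      have hr0 : 0 ≤ r := Int.fract_nonneg _
      have hr1 : r ≤ 1 := (Int.fract_lt_one _).le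
      have hsplit : t + s ((φ₁ ∘ φ₂) n) = (t + r) + (m : ℝ) := by
        simp only [hrdef, hmdef, Int.fract, Function.comp_apply]; ring
      have key : interp S (t + s ((φ₁ ∘ φ₂) n)) = interp (fun k => S (k + m)) (t + r) := by
        rw [hsplit, interp_add_int]
      rw [key]
      have humem : t + r ∈ Set.Icc (-(M + 1)) (M + 1) :=
        ⟨by linarith [htM.1], by linarith [htM.2]⟩
      have d2 : dist (interp T (t + r)) (interp (fun k => S (k + m)) (t + r)) < ε / 2 := by
        rw [dist_eq_norm, norm_sub_rev]; exact h1 (t + r) humem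
      have d1 : dist (interp T (t + rL)) (interp T (t + r)) < ε / 2 := by
        apply hδ (t + rL) ⟨by linarith [htM.1, hrL.1], by linarith [htM.2, hrL.2]⟩
          (t + r) ⟨by linarith [htM.1], by linarith [htM.2]⟩
        rw [dist_add_left, dist_comm]
        exact h2
      calc dist (interp T (t + rL)) (interp (fun k => S (k + m)) (t + r))
          ≤ dist (interp T (t + rL)) (interp T (t + r))
            + dist (interp T (t + r)) (interp (fun k => S (k + m)) (t + r)) := dist_triangle _ _ _
        _ < ε := by linarith
    · intro K hK
      rw [Metric.tendstoUniformlyOn_iff]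
      intro ε hε
      obtain ⟨M, hM⟩ := hK.isBounded.subset_closedBall 0
      rw [Real.closedBall_eq_Icc, zero_sub, zero_add] at hM
      obtain ⟨δ, hδpos, hδ⟩ := Metric.uniformContinuousOn_iff.mp
        ((isCompact_Icc (a := -(M + 2)) (b := M + 2)).uniformContinuousOn_of_continuous
          (continuous_interp S).continuousOn) (ε / 2) (half_pos hε)
      have E1 := interp_unif (A := fun n k => T (k - ⌊s (φ₁ (φ₂ n))⌋)) (B := S) hT2
        (M + 1) (half_pos hε)
      have E2 := Metric.tendsto_nhds.mp hrψ δ hδpos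
      filter_upwards [E1, E2] with n h1 h2 t ht
      have htM : t ∈ Set.Icc (-M) M := hM ht
      set r := Int.fract (s (φ₁ (φ₂ n))) with hrdef
      set m := ⌊s (φ₁ (φ₂ n))⌋ with hmdef
      have hr0 : 0 ≤ r := Int.fract_nonneg _
      have hr1 : r ≤ 1 := (Int.fract_lt_one _).le
      have hsplit : (t - s ((φ₁ ∘ φ₂) n)) + rL = (t + (rL - r)) - (m : ℝ) := by
        simp only [hrdef, hmdef, Int.fract, Function.comp_apply]; ring
      have key : interp T ((t - s ((φ₁ ∘ φ₂) n)) + rL)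
          = interp (fun k => T (k - m)) (t + (rL - r)) := by
        rw [hsplit, interp_sub_int]
      rw [key]
      have hvmem : t + (rL - r) ∈ Set.Icc (-(M + 1)) (M + 1) :=
        ⟨by linarith [htM.1, htM.2, hrL.1, hrL.2], by linarith [htM.1, htM.2, hrL.1, hrL.2]⟩
      have d2 : dist (interp S (t + (rL - r))) (interp (fun k => T (k - m)) (t + (rL - r)))
          < ε / 2 := by
        rw [dist_eq_norm, norm_sub_rev]; exact h1 _ hvmem
      have d1 : dist (interp S t) (interp S (t + (rL - r))) < ε / 2 := by
        apply hδ t ⟨by linarith [htM.1], by linarith [htM.2]⟩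
          (t + (rL - r)) ⟨by linarith [htM.1, htM.2, hrL.1, hrL.2], by linarith [htM.1, htM.2, hrL.1, hrL.2]⟩
        have : dist t (t + (rL - r)) = dist r rL := by
          rw [Real.dist_eq, Real.dist_eq]
          rw [show t - (t + (rL - r)) = r - rL by ring]
        rw [this]
        exact h2
      calc dist (interp S t) (interp (fun k => T (k - m)) (t + (rL - r)))
          ≤ dist (interp S t) (interp S (t + (rL - r)))
            + dist (interp S (t + (rL - r))) (interp (fun k => T (k - m)) (t + (rL - r))) :=
            dist_triangle _ _ _
        _ < ε := by linarith
  · intro n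
    rw [hf]
    exact interp_intCast S n
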